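/- Let φ : [0, 2π] → ℝ be continuously differentiable with |φ'| ≤ M, and let θ : [0, 2π] → [0, 2π] be an increasing homeomorphism satisfying |θ(x) − θ(y)| ≥ α|x − y|^p for constants α > 0 and p < 2. Then the double integral ∫₀^{2π}∫₀^{2π} |cot((θ(x)−θ(y))/2)| · |φ(x) − φ(y)| dx dy is finite. -/

import Mathlib

open MeasureTheory Real

lemma sin_lb' {t : ℝ} (h0 : 0 ≤ t) (h1 : t ≤ π) :
    2 * (t * (π - t)) ≤ π ^ 2 * Real.sin t := by
  have hπ := Real.pi_pos
  have hsin : 0 ≤ Real.sin t := Real.sin_nonneg_of_nonneg_of_le_pi h0 h1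
  rcases le_or_gt t (π / 2) with h | h
  · have base := Real.mul_le_sin h0 h
    rw [div_mul_eq_mul_div] at base
    have h2 := (div_le_iff₀ hπ).1 base
    nlinarith [mul_le_mul_of_nonneg_right h2 (sub_nonneg.2 h1),
      mul_nonneg (mul_nonneg hπ.le hsin) h0]
  · have h0' : 0 ≤ π - t := by linarith
    have base := Real.mul_le_sin h0' (by linarith : π - t ≤ π / 2)
    rw [Real.sin_pi_sub, div_mul_eq_mul_div] at base
    have h2 := (div_le_iff₀ hπ).1 base
    nlinarith [mul_le_mul_of_nonneg_right h2 h0,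
      mul_nonneg (mul_nonneg hπ.le hsin) h0']

lemma cot_bound' {d : ℝ} (h0 : 0 < d) (h2 : d < 2 * π) :
    |Real.cot (d / 2)| ≤ π * (1 / d + 1 / (2 * π - d)) := by
  have hπ := Real.pi_pos
  have ht0 : 0 < d / 2 := by linarith
  have ht1 : d / 2 < π := by linarith
  have hs : 0 < Real.sin (d / 2) := Real.sin_pos_of_pos_of_lt_pi ht0 ht1
  have hlb := sin_lb' ht0.le ht1.le
  have h1 : |Real.cot (d / 2)| ≤ 1 / Real.sin (d / 2) := by
    rw [Real.cot_eq_cos_div_sin, abs_div, abs_of_pos hs]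
    gcongr
    exact Real.abs_cos_le_one _
  have hden : (0:ℝ) < d * (2 * π - d) := by nlinarith
  have hmul : d * (2 * π - d) ≤ Real.sin (d / 2) * (2 * π ^ 2) := by nlinarith
  have h2' : 1 / Real.sin (d / 2) ≤ 2 * π ^ 2 / (d * (2 * π - d)) := by
    rw [div_le_div_iff₀ hs hden, one_mul]
    linarith
  have hd2 : 2 * π - d ≠ 0 := by linarith
  have heq : π * (1 / d + 1 / (2 * π - d)) = 2 * π ^ 2 / (d * (2 * π - d)) := by
    rw [div_add_div _ _ h0.ne' hd2, mul_div_assoc']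
    congr 1
    ring
  rw [heq]
  linarith

lemma abs_rpow_integrableOn' {e R : ℝ} (he : -1 < e) (hR : 0 ≤ R) :
    IntegrableOn (fun t : ℝ => |t| ^ e) (Set.Icc (-R) R) volume := by
  have hpos : IntegrableOn (fun t : ℝ => |t| ^ e) (Set.Icc 0 R) volume := by
    have h0 : IntegrableOn (fun t : ℝ => t ^ e) (Set.Ioc 0 R) volume := by
      have h := intervalIntegral.intervalIntegrable_rpow' (a := 0) (b := R) he
      rwa [intervalIntegrable_iff, Set.uIoc_of_le hR] at h
    have h1 : IntegrableOn (fun t : ℝ => |t| ^ e) (Set.Ioc 0 R) volume :=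
      h0.congr_fun (fun t ht => by rw [abs_of_pos ht.1]) measurableSet_Ioc
    exact h1.congr_set_ae MeasureTheory.Ioc_ae_eq_Icc.symm
  have hneg : IntegrableOn (fun t : ℝ => |t| ^ e) (Set.Icc (-R) 0) volume := by
    have h := intervalIntegral.intervalIntegrable_rpow' (a := R) (b := 0) he
    have h2 := (IntervalIntegrable.iff_comp_neg enorm_ne_top).1 h
    simp only [neg_zero] at h2
    rw [intervalIntegrable_iff, Set.uIoc_of_le (by linarith : -R ≤ 0)] at h2
    have h3 : IntegrableOn (fun t : ℝ => |t| ^ e) (Set.Ioc (-R) 0) volume :=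
      h2.congr_fun (fun t ht => by rw [abs_of_nonpos ht.2]) measurableSet_Ioc
    exact h3.congr_set_ae MeasureTheory.Ioc_ae_eq_Icc.symm
  have := hneg.union hpos
  rwa [Set.Icc_union_Icc_eq_Icc (by linarith : -R ≤ 0) hR] at this

lemma rpow_int1' {c : ℝ} (hc : -1 < c) :
    IntegrableOn (fun x : ℝ => x ^ c) (Set.Icc 0 (2 * π)) volume := by
  have hπ := Real.pi_pos
  have h := intervalIntegral.intervalIntegrable_rpow' (a := 0) (b := 2 * π) hc
  rwa [intervalIntegrable_iff', Set.uIcc_of_le (by positivity)] at h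

lemma rpow_int2' {c : ℝ} (hc : -1 < c) :
    IntegrableOn (fun x : ℝ => (2 * π - x) ^ c) (Set.Icc 0 (2 * π)) volume := by
  have hπ := Real.pi_pos
  have h := (intervalIntegral.intervalIntegrable_rpow' (a := 0) (b := 2 * π) hc).comp_sub_left (2 * π)
  simp only [sub_zero, sub_self] at h
  rwa [intervalIntegrable_iff', Set.uIcc_comm, Set.uIcc_of_le (by positivity)] at h

lemma prodIcc' {f g : ℝ → ℝ} (hf : IntegrableOn f (Set.Icc 0 (2 * π)) volume)
    (hg : IntegrableOn g (Set.Icc 0 (2 * π)) volume) :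
    IntegrableOn (fun q : ℝ × ℝ => f q.1 * g q.2)
      (Set.Icc 0 (2 * π) ×ˢ Set.Icc 0 (2 * π)) volume := by
  rw [IntegrableOn, Measure.volume_eq_prod ℝ ℝ, ← Measure.prod_restrict]
  exact hf.mul_prod hg

lemma diff_rpow_integrableOn' {e : ℝ} (he : -1 < e) :
    IntegrableOn (fun q : ℝ × ℝ => |q.1 - q.2| ^ e)
      (Set.Icc 0 (2 * π) ×ˢ Set.Icc 0 (2 * π)) volume := by
  have hπ := Real.pi_pos
  set g : ℝ → ℝ := (Set.Icc (-(2 * π)) (2 * π)).indicator (fun t => |t| ^ e) with hg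
  have hgi : Integrable g volume :=
    (abs_rpow_integrableOn' he (by positivity)).integrable_indicator measurableSet_Icc
  set f : ℝ → ℝ := (Set.Icc (0:ℝ) (2 * π)).indicator (fun _ => (1:ℝ)) with hf
  have hfi : Integrable f volume := by
    apply IntegrableOn.integrable_indicator _ measurableSet_Icc
    exact integrableOn_const measure_Icc_lt_top.ne
  have hconv := hfi.convolution_integrand (ContinuousLinearMap.mul ℝ ℝ) hgi
  rw [← Measure.volume_eq_prod ℝ ℝ] at hconv
  apply Integrable.mono' (hconv.restrict (s := Set.Icc 0 (2 * π) ×ˢ Set.Icc 0 (2 * π)))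
  · exact ((measurable_fst.sub measurable_snd).abs.pow measurable_const).aestronglyMeasurable
  · filter_upwards [ae_restrict_mem (measurableSet_Icc.prod measurableSet_Icc)] with q hq
    have h12 : q.1 - q.2 ∈ Set.Icc (-(2 * π)) (2 * π) := by
      constructor
      · have := hq.1.1; have := hq.2.2; simp only [neg_le, neg_sub]; linarith [hq.1.1, hq.2.2]
      · linarith [hq.1.2, hq.2.1]
    rw [Real.norm_eq_abs, abs_of_nonneg (Real.rpow_nonneg (abs_nonneg _) _)]
    rw [ContinuousLinearMap.mul_apply', hf, hg]
    rw [Set.indicator_of_mem hq.2 (fun _ => (1:ℝ)), Set.indicator_of_mem h12, one_mul]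

set_option maxHeartbeats 8000000 in
theorem variation_integral_finite (φ θ : ℝ → ℝ) (M α p : ℝ)
    (hφ : ContDiffOn ℝ 1 φ (Set.Icc 0 (2 * π)))
    (hφ' : ∀ x ∈ Set.Icc 0 (2 * π), |deriv φ x| ≤ M)
    (hθmono : StrictMonoOn θ (Set.Icc 0 (2 * π)))
    (hθcont : ContinuousOn θ (Set.Icc 0 (2 * π)))
    (hθsurj : Set.MapsTo θ (Set.Icc 0 (2 * π)) (Set.Icc 0 (2 * π)) ∧
      Set.SurjOn θ (Set.Icc 0 (2 * π)) (Set.Icc 0 (2 * π)))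
    (hα : 0 < α) (hp : p < 2)
    (hθhold : ∀ x ∈ Set.Icc 0 (2 * π), ∀ y ∈ Set.Icc 0 (2 * π),
      α * |x - y| ^ p ≤ |θ x - θ y|) :
    IntegrableOn
      (fun q : ℝ × ℝ => |Real.cot ((θ q.1 - θ q.2) / 2)| * |φ q.1 - φ q.2|)
      (Set.Icc 0 (2 * π) ×ˢ Set.Icc 0 (2 * π)) volume := by
  have hπ := Real.pi_pos
  have h2π : (0:ℝ) < 2 * π := by linarith
  have h0I : (0:ℝ) ∈ Set.Icc (0:ℝ) (2 * π) := Set.mem_Icc.2 ⟨le_rfl, h2π.le⟩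
  have h2πI : (2 * π : ℝ) ∈ Set.Icc (0:ℝ) (2 * π) := Set.mem_Icc.2 ⟨h2π.le, le_rfl⟩
  -- θ 0 = 0 and θ (2π) = 2π
  have hθ0 : θ 0 = 0 := by
    obtain ⟨z, hz, hz0⟩ := hθsurj.2 h0I
    have h1 : (0:ℝ) ≤ θ 0 := (hθsurj.1 h0I).1
    have h2 : θ 0 ≤ θ z := hθmono.monotoneOn h0I hz hz.1
    rw [hz0] at h2
    linarith
  have hθ2π : θ (2 * π) = 2 * π := by
    obtain ⟨z, hz, hz0⟩ := hθsurj.2 h2πI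
    have h1 : θ (2 * π) ≤ 2 * π := (hθsurj.1 h2πI).2
    have h2 : θ z ≤ θ (2 * π) := hθmono.monotoneOn hz h2πI hz.2
    rw [hz0] at h2
    linarith
  have hM : 0 ≤ M := le_trans (abs_nonneg _) (hφ' 0 h0I)
  -- p is positive
  have hp0 : 0 < p := by
    rcases lt_trichotomy p 0 with hneg | rfl | hpos
    · exfalso
      have hδ0 : 0 < min (2 * π) (α * (2 * π) ^ p / 2) := lt_min h2π (by positivity)
      have hδI : min (2 * π) (α * (2 * π) ^ p / 2) ∈ Set.Icc (0:ℝ) (2 * π) :=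
        Set.mem_Icc.2 ⟨hδ0.le, min_le_left _ _⟩
      obtain ⟨y, hy, hθy⟩ := hθsurj.2 hδI
      have hy0 : 0 < y := by
        rcases eq_or_lt_of_le hy.1 with h | h
        · exfalso
          rw [← h, hθ0] at hθy
          linarith
        · exact h
      have hkey := hθhold y hy 0 h0I
      rw [hθ0, sub_zero, sub_zero, abs_of_pos hy0,
        abs_of_pos (by rw [hθy]; exact hδ0), hθy] at hkey
      have h2 : (2 * π) ^ p ≤ y ^ p := Real.rpow_le_rpow_of_nonpos hy0 hy.2 hneg.le
      have h5 : α * (2 * π) ^ p ≤ α * y ^ p := mul_le_mul_of_nonneg_left h2 hα.le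
      have h6 := min_le_right (2 * π) (α * (2 * π) ^ p / 2)
      have h7 : (0:ℝ) < α * (2 * π) ^ p := by positivity
      linarith
    · exfalso
      have h := hθhold 0 h0I 0 h0I
      simp only [sub_self, abs_zero, Real.rpow_zero, mul_one] at h
      linarith
    · exact hpos
  -- Lipschitz bound on the interior
  have hlip : ∀ x ∈ Set.Ioo (0:ℝ) (2 * π), ∀ y ∈ Set.Ioo (0:ℝ) (2 * π),
      |φ x - φ y| ≤ M * |x - y| := by
    intro x hx y hy
    have hdiff : ∀ z ∈ Set.Ioo (0:ℝ) (2 * π), DifferentiableAt ℝ φ z := by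
      intro z hz
      have h1 : DifferentiableWithinAt ℝ φ (Set.Icc 0 (2 * π)) z :=
        (hφ.differentiableOn one_ne_zero) z ⟨hz.1.le, hz.2.le⟩
      exact h1.differentiableAt (Icc_mem_nhds hz.1 hz.2)
    have := Convex.norm_image_sub_le_of_norm_deriv_le hdiff
      (fun z hz => hφ' z ⟨hz.1.le, hz.2.le⟩) (convex_Ioo _ _) hy hx
    rwa [Real.norm_eq_abs, Real.norm_eq_abs] at this
  -- the pointwise key estimate (for x < y in the open interval)
  have key : ∀ x y : ℝ, x ∈ Set.Ioo (0:ℝ) (2 * π) → y ∈ Set.Ioo (0:ℝ) (2 * π) → x < y →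
      |Real.cot ((θ x - θ y) / 2)| * |φ x - φ y| ≤
        π * M / α * |x - y| ^ (1 - p)
          + π ^ 2 * M / α * (x ^ (-(p/2)) * (2 * π - y) ^ (-(p/2))) := by
    intro x y hx hy hxy
    have hxI : x ∈ Set.Icc (0:ℝ) (2 * π) := ⟨hx.1.le, hx.2.le⟩
    have hyI : y ∈ Set.Icc (0:ℝ) (2 * π) := ⟨hy.1.le, hy.2.le⟩
    have hθx0 : 0 < θ x := by
      rw [← hθ0]; exact hθmono h0I hxI hx.1
    have hθy2 : θ y < 2 * π := by
      rw [← hθ2π]; exact hθmono hyI h2πI hy.2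
    have hθxy : θ x < θ y := hθmono hxI hyI hxy
    have hd0 : 0 < θ y - θ x := by linarith
    have hd2 : θ y - θ x < 2 * π := by linarith
    have hcot : |Real.cot ((θ x - θ y) / 2)| = |Real.cot ((θ y - θ x) / 2)| := by
      rw [show (θ x - θ y) / 2 = -((θ y - θ x) / 2) by ring, Real.cot_eq_cos_div_sin,
        Real.cot_eq_cos_div_sin, Real.cos_neg, Real.sin_neg, div_neg, abs_neg]
    have hcb := cot_bound' hd0 hd2
    have hφb : |φ x - φ y| ≤ M * (y - x) := by
      have h := hlip x hx y hy
      rwa [abs_of_neg (by linarith : x - y < 0), neg_sub] at h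
    have hxy' : |x - y| = y - x := by
      rw [abs_of_neg (by linarith : x - y < 0), neg_sub]
    have hb1 : α * (y - x) ^ p ≤ θ y - θ x := by
      have h := hθhold x hxI y hyI
      rwa [hxy', abs_of_neg (by linarith : θ x - θ y < 0), neg_sub] at h
    have hbx : α * x ^ p ≤ θ x := by
      have h := hθhold x hxI 0 h0I
      rwa [hθ0, sub_zero, sub_zero, abs_of_pos hx.1, abs_of_pos hθx0] at h
    have hby : α * (2 * π - y) ^ p ≤ 2 * π - θ y := by
      have h := hθhold (2 * π) h2πI y hyI
      rwa [hθ2π, abs_of_pos (by linarith [hy.2] : (0:ℝ) < 2 * π - y),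
        abs_of_pos (by linarith : (0:ℝ) < 2 * π - θ y)] at h
    set u := x ^ (p/2) with hu
    set v := (2 * π - y) ^ (p/2) with hv
    have hu0 : 0 < u := Real.rpow_pos_of_pos hx.1 _
    have hv0 : 0 < v := Real.rpow_pos_of_pos (by linarith [hy.2]) _
    have huu : α * (u * u) = α * x ^ p := by
      rw [hu, ← Real.rpow_add hx.1]; norm_num
    have hvv : α * (v * v) = α * (2 * π - y) ^ p := by
      rw [hv, ← Real.rpow_add (by linarith [hy.2] : (0:ℝ) < 2 * π - y)]; norm_num
    have hamgm : 2 * α * (u * v) ≤ 2 * π - (θ y - θ x) := by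
      have h1 : 2 * (u * v) ≤ u * u + v * v := by nlinarith [sq_nonneg (u - v)]
      have h2 := mul_le_mul_of_nonneg_left h1 hα.le
      rw [mul_add] at h2
      calc 2 * α * (u * v) = α * (2 * (u * v)) := by ring
        _ ≤ α * (u * u) + α * (v * v) := h2
        _ = α * x ^ p + α * (2 * π - y) ^ p := by rw [huu, hvv]
        _ ≤ θ x + (2 * π - θ y) := add_le_add hbx hby
        _ = 2 * π - (θ y - θ x) := by ring
    have hfinal : |Real.cot ((θ x - θ y) / 2)| * |φ x - φ y| ≤
        (π * (1 / (θ y - θ x) + 1 / (2 * π - (θ y - θ x)))) * (M * (y - x)) := by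
      rw [hcot]
      exact mul_le_mul hcb hφb (abs_nonneg _)
        (mul_nonneg hπ.le (add_nonneg (one_div_nonneg.2 hd0.le)
          (one_div_nonneg.2 (by linarith))))
    have hsplit : (π * (1 / (θ y - θ x) + 1 / (2 * π - (θ y - θ x)))) * (M * (y - x))
        = π * M * (y - x) / (θ y - θ x) + π * M * (y - x) / (2 * π - (θ y - θ x)) := by
      field_simp
    have hyx0 : 0 < y - x := by linarith
    have ht1 : π * M * (y - x) / (θ y - θ x) ≤ π * M / α * |x - y| ^ (1 - p) := by
      have hpow : (0:ℝ) < α * (y - x) ^ p := by positivity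
      have hd1 : π * M * (y - x) / (θ y - θ x) ≤ π * M * (y - x) / (α * (y - x) ^ p) :=
        div_le_div_of_nonneg_left (by positivity) hpow hb1
      have heq : π * M * (y - x) / (α * (y - x) ^ p) = π * M / α * (y - x) ^ (1 - p) := by
        rw [Real.rpow_sub hyx0, Real.rpow_one]
        field_simp
      rw [hxy']
      linarith [hd1, heq]
    have ht2 : π * M * (y - x) / (2 * π - (θ y - θ x)) ≤
        π ^ 2 * M / α * (x ^ (-(p/2)) * (2 * π - y) ^ (-(p/2))) := by
      have h2d : 0 < 2 * π - (θ y - θ x) := by linarith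
      have hstep : π * M * (y - x) / (2 * π - (θ y - θ x)) ≤
          π * M * (2 * π) / (2 * α * (u * v)) := by
        apply div_le_div₀ (by positivity)
        · have h5 : y - x ≤ 2 * π := by linarith [hx.1, hy.2]
          nlinarith [mul_nonneg (mul_nonneg hπ.le hM) (sub_nonneg.2 h5)]
        · positivity
        · exact hamgm
      have heq2 : π * M * (2 * π) / (2 * α * (u * v)) =
          π ^ 2 * M / α * (x ^ (-(p/2)) * (2 * π - y) ^ (-(p/2))) := by
        rw [Real.rpow_neg hx.1.le, Real.rpow_neg (by linarith [hy.2] : (0:ℝ) ≤ 2 * π - y),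
          ← hu, ← hv]
        field_simp
      linarith [hstep, heq2]
    calc |Real.cot ((θ x - θ y) / 2)| * |φ x - φ y|
        ≤ (π * (1 / (θ y - θ x) + 1 / (2 * π - (θ y - θ x)))) * (M * (y - x)) := hfinal
      _ = π * M * (y - x) / (θ y - θ x) + π * M * (y - x) / (2 * π - (θ y - θ x)) := hsplit
      _ ≤ _ := add_le_add ht1 ht2
  -- null set of bad points
  have hq2e : (-1:ℝ) < -(p/2) := by linarith
  have hS : MeasurableSet (Set.Icc (0:ℝ) (2*π) ×ˢ Set.Icc (0:ℝ) (2*π)) :=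
    measurableSet_Icc.prod measurableSet_Icc
  have hnull : volume {q : ℝ × ℝ | q.1 = q.2 ∨ q.1 = 0 ∨ q.1 = 2*π ∨ q.2 = 0 ∨ q.2 = 2*π} = 0 := by
    rw [Set.setOf_or, Set.setOf_or, Set.setOf_or, Set.setOf_or]
    refine measure_union_null ?_ (measure_union_null ?_ (measure_union_null ?_
      (measure_union_null ?_ ?_)))
    · have hD : MeasurableSet {q : ℝ × ℝ | q.1 = q.2} :=
        measurableSet_eq_fun measurable_fst measurable_snd
      rw [Measure.volume_eq_prod ℝ ℝ, Measure.prod_apply hD]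
      have hpre : ∀ x : ℝ, (Prod.mk x ⁻¹' {q : ℝ × ℝ | q.1 = q.2}) = {x} := by
        intro x; ext z; simp [eq_comm]
      simp [hpre]
    · rw [show {q : ℝ × ℝ | q.1 = 0} = ({(0:ℝ)} ×ˢ (Set.univ : Set ℝ)) by
        ext ⟨a,b⟩; simp [eq_comm], Measure.volume_eq_prod ℝ ℝ, Measure.prod_prod]
      simp
    · rw [show {q : ℝ × ℝ | q.1 = 2*π} = ({(2*π:ℝ)} ×ˢ (Set.univ : Set ℝ)) by
        ext ⟨a,b⟩; simp [eq_comm], Measure.volume_eq_prod ℝ ℝ, Measure.prod_prod]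
      simp
    · rw [show {q : ℝ × ℝ | q.2 = 0} = ((Set.univ : Set ℝ) ×ˢ {(0:ℝ)}) by
        ext ⟨a,b⟩; simp [eq_comm], Measure.volume_eq_prod ℝ ℝ, Measure.prod_prod]
      simp
    · rw [show {q : ℝ × ℝ | q.2 = 2*π} = ((Set.univ : Set ℝ) ×ˢ {(2*π:ℝ)}) by
        ext ⟨a,b⟩; simp [eq_comm], Measure.volume_eq_prod ℝ ℝ, Measure.prod_prod]
      simp
  -- the dominating function
  have hG : Integrable (fun q : ℝ × ℝ => π * M / α * |q.1 - q.2| ^ (1 - p)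
      + π ^ 2 * M / α * (q.1 ^ (-(p/2)) * (2 * π - q.2) ^ (-(p/2))
        + (2 * π - q.1) ^ (-(p/2)) * q.2 ^ (-(p/2))))
      (volume.restrict (Set.Icc 0 (2*π) ×ˢ Set.Icc 0 (2*π))) := by
    apply Integrable.add
    · exact (diff_rpow_integrableOn' (by linarith : (-1:ℝ) < 1 - p)).const_mul _
    · apply Integrable.const_mul
      exact (prodIcc' (rpow_int1' hq2e) (rpow_int2' hq2e)).add
        (prodIcc' (rpow_int2' hq2e) (rpow_int1' hq2e))
  -- measurability of the integrand
  have hmeas : AEStronglyMeasurable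
      (fun q : ℝ × ℝ => |Real.cot ((θ q.1 - θ q.2) / 2)| * |φ q.1 - φ q.2|)
      (volume.restrict (Set.Icc 0 (2*π) ×ˢ Set.Icc 0 (2*π))) := by
    have hθ1 : ContinuousOn (fun q : ℝ × ℝ => θ q.1 - θ q.2)
        (Set.Icc 0 (2*π) ×ˢ Set.Icc 0 (2*π)) :=
      (hθcont.comp continuous_fst.continuousOn fun q hq => hq.1).sub
        (hθcont.comp continuous_snd.continuousOn fun q hq => hq.2)
    have hφ1 : ContinuousOn (fun q : ℝ × ℝ => φ q.1 - φ q.2)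
        (Set.Icc 0 (2*π) ×ˢ Set.Icc 0 (2*π)) :=
      (hφ.continuousOn.comp continuous_fst.continuousOn fun q hq => hq.1).sub
        (hφ.continuousOn.comp continuous_snd.continuousOn fun q hq => hq.2)
    have hcotm : Measurable fun x : ℝ => |Real.cot (x / 2)| := by
      have hrw : (fun x : ℝ => Real.cot (x / 2)) =
          fun x : ℝ => Real.cos (x / 2) / Real.sin (x / 2) := by
        funext x; rw [Real.cot_eq_cos_div_sin]
      have hm2 : Measurable fun x : ℝ => x / 2 := measurable_id.div_const 2
      have : Measurable fun x : ℝ => Real.cot (x / 2) := by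
        rw [hrw]
        exact (Real.measurable_cos.comp hm2).div (Real.measurable_sin.comp hm2)
      exact this.abs
    have h1 : AEMeasurable (fun q : ℝ × ℝ => θ q.1 - θ q.2)
        (volume.restrict (Set.Icc 0 (2*π) ×ˢ Set.Icc 0 (2*π))) := hθ1.aemeasurable hS
    exact ((hcotm.comp_aemeasurable h1).mul
      ((measurable_abs.comp_aemeasurable (hφ1.aemeasurable hS)))).aestronglyMeasurable
  -- assemble
  apply Integrable.mono' hG hmeas
  have hae : ∀ᵐ q : ℝ × ℝ ∂(volume.restrict (Set.Icc 0 (2*π) ×ˢ Set.Icc 0 (2*π))),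
      q ∉ {q : ℝ × ℝ | q.1 = q.2 ∨ q.1 = 0 ∨ q.1 = 2*π ∨ q.2 = 0 ∨ q.2 = 2*π} :=
    ae_restrict_of_ae (measure_eq_zero_iff_ae_notMem.1 hnull)
  filter_upwards [ae_restrict_mem hS, hae] with q hq hbad
  simp only [Set.mem_setOf_eq, not_or] at hbad
  obtain ⟨hne, h10, h12, h20, h22⟩ := hbad
  have hx : q.1 ∈ Set.Ioo (0:ℝ) (2*π) :=
    ⟨lt_of_le_of_ne hq.1.1 (Ne.symm h10), lt_of_le_of_ne hq.1.2 h12⟩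
  have hy : q.2 ∈ Set.Ioo (0:ℝ) (2*π) :=
    ⟨lt_of_le_of_ne hq.2.1 (Ne.symm h20), lt_of_le_of_ne hq.2.2 h22⟩
  rw [Real.norm_eq_abs, abs_of_nonneg (mul_nonneg (abs_nonneg _) (abs_nonneg _))]
  have hC2 : (0:ℝ) ≤ π ^ 2 * M / α := div_nonneg (mul_nonneg (by positivity) hM) hα.le
  rcases lt_or_gt_of_ne hne with h | h
  · refine le_trans (key q.1 q.2 hx hy h) ?_
    have hT2 : (0:ℝ) ≤ (2 * π - q.1) ^ (-(p/2)) * q.2 ^ (-(p/2)) :=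
      mul_nonneg (Real.rpow_nonneg (by linarith [hx.2]) _) (Real.rpow_nonneg hy.1.le _)
    nlinarith [mul_nonneg hC2 hT2]
  · have hsym := key q.2 q.1 hy hx h
    have e1 : |Real.cot ((θ q.1 - θ q.2) / 2)| = |Real.cot ((θ q.2 - θ q.1) / 2)| := by
      rw [show (θ q.1 - θ q.2) / 2 = -((θ q.2 - θ q.1) / 2) by ring, Real.cot_eq_cos_div_sin,
        Real.cot_eq_cos_div_sin, Real.cos_neg, Real.sin_neg, div_neg, abs_neg]
    have e2 : |φ q.1 - φ q.2| = |φ q.2 - φ q.1| := abs_sub_comm _ _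
    have e3 : |q.2 - q.1| = |q.1 - q.2| := abs_sub_comm _ _
    rw [e1, e2]
    refine le_trans hsym ?_
    rw [e3]
    have hT1 : (0:ℝ) ≤ q.1 ^ (-(p/2)) * (2 * π - q.2) ^ (-(p/2)) :=
      mul_nonneg (Real.rpow_nonneg hx.1.le _) (Real.rpow_nonneg (by linarith [hy.2]) _)
    nlinarith [mul_nonneg hC2 hT1]
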